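/- For every finite odd set A ⊆ Z^d, the number of edges in the edge-boundary of A equals 2d times the difference between the number of odd vertices in A and the number of even vertices in A. In particular, if A contains an even vertex then |∂A| ≥ 2d(2d−1). -/

import Mathlib

open Finset

/-- Vertices of the lattice `ℤ^d`. -/
abbrev Vtx (d : ℕ) := Fin d → ℤ

/-- The nearest neighbors of a lattice point `u`. -/
def nbrs {d : ℕ} (u : Vtx d) : Finset (Vtx d) :=
  Finset.univ.biUnion fun i : Fin d =>
    {Function.update u i (u i + 1), Function.update u i (u i - 1)}

/-- A vertex is even if the sum of its coordinates is even. -/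
def evenV {d : ℕ} (u : Vtx d) : Prop := (∑ i, u i) % 2 = 0

instance {d : ℕ} : DecidablePred (evenV (d := d)) := fun u =>
  inferInstanceAs (Decidable ((∑ i, u i) % 2 = 0))

/-- The edge boundary of `A`, as the set of (directed) boundary edges
`(u, v)` with `u ∈ A`, `v ∉ A` adjacent. -/
def edgeBdry {d : ℕ} (A : Finset (Vtx d)) : Finset (Vtx d × Vtx d) :=
  A.biUnion fun u => ((nbrs u).filter fun v => v ∉ A).image fun v => (u, v)

/-! ### Auxiliary material -/

open Pointwise

/-- The set of the `2d` unit step vectors. -/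
def bvec (d : ℕ) : Finset (Vtx d) :=
  Finset.univ.biUnion fun i : Fin d => {Pi.single i (1 : ℤ), -Pi.single i (1 : ℤ)}

lemma single_ne_neg_single {d : ℕ} (i j : Fin d) :
    (Pi.single i (1 : ℤ) : Vtx d) ≠ -(Pi.single j (1 : ℤ) : Vtx d) := by
  intro h
  have := congrFun h i
  simp only [Pi.single_apply, Pi.neg_apply] at this
  split_ifs at this <;> omega

lemma single_injn {d : ℕ} {i j : Fin d} (h : i ≠ j) :
    (Pi.single i (1 : ℤ) : Vtx d) ≠ (Pi.single j (1 : ℤ) : Vtx d) := by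
  intro hh
  have := congrFun hh i
  simp [Pi.single_apply, h] at this

lemma mem_bvec_iff {d : ℕ} {b : Vtx d} :
    b ∈ bvec d ↔ ∃ i : Fin d, b = Pi.single i 1 ∨ b = -Pi.single i 1 := by
  simp [bvec, mem_biUnion]

lemma neg_mem_bvec {d : ℕ} {b : Vtx d} (hb : b ∈ bvec d) : -b ∈ bvec d := by
  rw [mem_bvec_iff] at hb ⊢
  obtain ⟨i, h | h⟩ := hb
  · exact ⟨i, Or.inr (by rw [h])⟩
  · exact ⟨i, Or.inl (by rw [h, neg_neg])⟩

lemma card_bvec (d : ℕ) : (bvec d).card = 2 * d := by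
  rw [bvec, card_biUnion]
  · have : ∀ i : Fin d, ({Pi.single i (1 : ℤ), -Pi.single i (1 : ℤ)} : Finset (Vtx d)).card = 2 :=
      fun i => card_pair (single_ne_neg_single i i)
    simp [this, Finset.sum_const, mul_comm]
  · intro i _ j _ hij
    simp only [disjoint_insert_left, disjoint_singleton_left, mem_insert, mem_singleton]
    constructor
    · push_neg
      exact ⟨single_injn hij, single_ne_neg_single i j⟩
    · push_neg
      exact ⟨fun h => single_ne_neg_single j i h.symm, fun h => single_injn hij (neg_injective h)⟩

lemma update_add {d : ℕ} (u : Vtx d) (i : Fin d) :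
    Function.update u i (u i + 1) = u + Pi.single i 1 := by
  funext j
  rcases eq_or_ne j i with rfl | h <;>
    simp [Function.update_apply, Pi.single_apply, *]

lemma update_sub {d : ℕ} (u : Vtx d) (i : Fin d) :
    Function.update u i (u i - 1) = u + -Pi.single i 1 := by
  funext j
  rcases eq_or_ne j i with rfl | h <;>
    simp [Function.update_apply, Pi.single_apply, sub_eq_add_neg, *]

lemma nbrs_eq {d : ℕ} (u : Vtx d) : nbrs u = (bvec d).image (u + ·) := by
  rw [nbrs, bvec, Finset.biUnion_image]
  refine Finset.biUnion_congr rfl fun i _ => ?_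
  rw [Finset.image_insert, Finset.image_singleton, update_add, update_sub]

lemma mem_nbrs_iff {d : ℕ} {u v : Vtx d} : v ∈ nbrs u ↔ ∃ b ∈ bvec d, v = u + b := by
  rw [nbrs_eq, Finset.mem_image]
  constructor
  · rintro ⟨b, hb, rfl⟩; exact ⟨b, hb, rfl⟩
  · rintro ⟨b, hb, rfl⟩; exact ⟨b, hb, rfl⟩

lemma card_nbrs {d : ℕ} (u : Vtx d) : (nbrs u).card = 2 * d := by
  rw [nbrs_eq, Finset.card_image_of_injective _ (add_right_injective u), card_bvec]

lemma sum_bvec {d : ℕ} {b : Vtx d} (hb : b ∈ bvec d) :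
    (∑ i, b i) = 1 ∨ (∑ i, b i) = -1 := by
  rw [mem_bvec_iff] at hb
  obtain ⟨i, rfl | rfl⟩ := hb
  · left; simp [Pi.single_apply]
  · right; simp [Pi.single_apply]

lemma evenV_nbrs {d : ℕ} {u v : Vtx d} (h : v ∈ nbrs u) : evenV v ↔ ¬ evenV u := by
  rw [mem_nbrs_iff] at h
  obtain ⟨b, hb, rfl⟩ := h
  have hsum : (∑ i, (u + b) i) = (∑ i, u i) + (∑ i, b i) := by
    simp [Finset.sum_add_distrib]
  rcases sum_bvec hb with h1 | h1 <;> · rw [evenV, evenV, hsum, h1]; omega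

lemma nbrs_symm {d : ℕ} {u v : Vtx d} (h : v ∈ nbrs u) : u ∈ nbrs v := by
  rw [mem_nbrs_iff] at h ⊢
  obtain ⟨b, hb, rfl⟩ := h
  exact ⟨-b, neg_mem_bvec hb, by ring⟩

/-- Counting pairs in a bi-union of images. -/
lemma card_pairs {d : ℕ} (S : Finset (Vtx d)) (f : Vtx d → Finset (Vtx d)) :
    (S.biUnion fun u => (f u).image fun v => (u, v)).card = ∑ u ∈ S, (f u).card := by
  rw [Finset.card_biUnion]
  · exact Finset.sum_congr rfl fun u _ =>
      Finset.card_image_of_injective _ (fun a b h => congrArg Prod.snd h)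
  · intro x _ y _ hxy
    rw [Function.onFun, Finset.disjoint_left]
    rintro a ha hb
    rw [Finset.mem_image] at ha hb
    obtain ⟨v, _, rfl⟩ := ha
    obtain ⟨w, _, h⟩ := hb
    exact hxy (congrArg Prod.fst h).symm

lemma mem_pairs {d : ℕ} {S : Finset (Vtx d)} {f : Vtx d → Finset (Vtx d)}
    {p : Vtx d × Vtx d} :
    p ∈ (S.biUnion fun u => (f u).image fun v => (u, v)) ↔ p.1 ∈ S ∧ p.2 ∈ f p.1 := by
  simp only [Finset.mem_biUnion, Finset.mem_image]
  constructor
  · rintro ⟨u, hu, v, hv, rfl⟩; exact ⟨hu, hv⟩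
  · rintro ⟨h1, h2⟩; exact ⟨p.1, h1, p.2, h2, rfl⟩

lemma torsionFree (d : ℕ) : IsAddTorsionFree (Vtx d) := by
  infer_instance

/-- For a finite odd set `A ⊆ ℤ^d` (all internal-boundary vertices are odd),
`|∂A| = 2d * (#odd vertices of A − #even vertices of A)`; in particular, if `A` contains an
even vertex then `|∂A| ≥ 2d(2d−1)`. -/
theorem odd_set_boundary {d : ℕ} (A : Finset (Vtx d))
    (hodd : ∀ u ∈ A, (∃ v ∈ nbrs u, v ∉ A) → ¬ evenV u) :
    ((edgeBdry A).card : ℤ)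
        = 2 * d * (((A.filter fun u => ¬ evenV u).card : ℤ)
            - ((A.filter fun u => evenV u).card : ℤ))
      ∧ ((∃ u ∈ A, evenV u) → 2 * d * (2 * d - 1) ≤ (edgeBdry A).card) := by
  classical
  set O := A.filter fun u => ¬ evenV u with hO
  set E := A.filter fun u => evenV u with hE
  -- every even vertex of A has all its neighbors in A
  have hfull : ∀ u ∈ A, evenV u → ∀ v ∈ nbrs u, v ∈ A := by
    intro u hu he v hv
    by_contra hvA
    exact hodd u hu ⟨v, hv, hvA⟩ he
  -- out and in degrees
  set out : Vtx d → ℕ := fun u => ((nbrs u).filter fun v => v ∉ A).card with hout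
  set inn : Vtx d → ℕ := fun u => ((nbrs u).filter fun v => v ∈ A).card with hinn
  have hsumdeg : ∀ u : Vtx d, inn u + out u = 2 * d := by
    intro u
    rw [hout, hinn]
    simpa [card_nbrs u] using
      card_filter_add_card_filter_not (s := nbrs u) (fun v => v ∈ A)
  -- |∂A| as a sum of out-degrees
  have hbd : (edgeBdry A).card = ∑ u ∈ A, out u := card_pairs A _
  -- out-degree of even vertices is 0; in-degree is 2d
  have hout0 : ∀ u ∈ E, out u = 0 := by
    intro u hu
    rw [hE, mem_filter] at hu
    rw [hout, Finset.card_eq_zero, Finset.filter_eq_empty_iff]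
    intro v hv
    simpa using hfull u hu.1 hu.2 v hv
  have hinfull : ∀ u ∈ E, inn u = 2 * d := by
    intro u hu
    have := hsumdeg u
    rw [hout0 u hu] at this
    omega
  -- internal directed edges starting in a given part
  have hswap : (O.biUnion fun u => ((nbrs u).filter fun v => v ∈ A).image fun v => (u, v)).card
      = (E.biUnion fun u => ((nbrs u).filter fun v => v ∈ A).image fun v => (u, v)).card := by
    apply Finset.card_nbij' (i := Prod.swap) (j := Prod.swap)
    · intro p hp
      rw [Finset.mem_coe, mem_pairs] at hp
      obtain ⟨h1, h2⟩ := hp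
      rw [hO, mem_filter] at h1
      rw [mem_filter] at h2
      rw [Finset.mem_coe, mem_pairs, hE, mem_filter, mem_filter]
      have hpar : evenV p.2 := by
        rw [evenV_nbrs h2.1]
        exact h1.2
      exact ⟨⟨h2.2, hpar⟩, nbrs_symm h2.1, h1.1⟩
    · intro p hp
      rw [Finset.mem_coe, mem_pairs] at hp
      obtain ⟨h1, h2⟩ := hp
      rw [hE, mem_filter] at h1
      rw [mem_filter] at h2
      rw [Finset.mem_coe, mem_pairs, hO, mem_filter, mem_filter]
      have hpar : ¬ evenV p.2 := by
        rw [evenV_nbrs h2.1]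
        exact fun hc => hc h1.2
      exact ⟨⟨h2.2, hpar⟩, nbrs_symm h2.1, h1.1⟩
    · intro p _; simp
    · intro p _; simp
  have hOsum : ∑ u ∈ O, inn u = 2 * d * E.card := by
    have h1 : ∑ u ∈ O, inn u
        = (O.biUnion fun u => ((nbrs u).filter fun v => v ∈ A).image fun v => (u, v)).card :=
      (card_pairs O _).symm
    have h2 : (E.biUnion fun u => ((nbrs u).filter fun v => v ∈ A).image fun v => (u, v)).card
        = ∑ u ∈ E, inn u := card_pairs E _
    rw [h1, hswap, h2, Finset.sum_congr rfl hinfull, Finset.sum_const, smul_eq_mul, mul_comm]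
  -- the main counting identity over ℕ
  have hmain : (edgeBdry A).card + 2 * d * E.card = 2 * d * O.card := by
    have hsplit : ∑ u ∈ A, out u = (∑ u ∈ E, out u) + ∑ u ∈ O, out u := by
      rw [hE, hO]
      exact (Finset.sum_filter_add_sum_filter_not A _ _).symm
    have hEzero : ∑ u ∈ E, out u = 0 := Finset.sum_eq_zero hout0
    have hOtot : (∑ u ∈ O, out u) + ∑ u ∈ O, inn u = 2 * d * O.card := by
      rw [← Finset.sum_add_distrib]
      have : ∀ u ∈ O, out u + inn u = 2 * d := fun u _ => by have := hsumdeg u; omega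
      rw [Finset.sum_congr rfl this, Finset.sum_const, smul_eq_mul, mul_comm]
    rw [hbd, hsplit, hEzero, zero_add, ← hOsum]
    omega
  have heq : ((edgeBdry A).card : ℤ) = 2 * d * ((O.card : ℤ) - (E.card : ℤ)) := by
    have h2 : ((edgeBdry A).card : ℤ) + 2 * d * E.card = 2 * d * O.card := by
      exact_mod_cast hmain
    linarith
  refine ⟨heq, ?_⟩
  rintro ⟨u0, hu0, hu0e⟩
  rcases Nat.eq_zero_or_pos d with hd | hd
  · subst hd
    simp
  -- The even vertices plus the step vectors inject into the odd vertices.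
  have hEne : E.Nonempty := ⟨u0, by rw [hE, mem_filter]; exact ⟨hu0, hu0e⟩⟩
  have hBne : (bvec d).Nonempty := by
    rw [← Finset.card_pos, card_bvec]; omega
  have hsub : E + bvec d ⊆ O := by
    intro x hx
    rw [Finset.mem_add] at hx
    obtain ⟨s, hs, b, hb, rfl⟩ := hx
    rw [hE, mem_filter] at hs
    have hnb : s + b ∈ nbrs s := mem_nbrs_iff.2 ⟨b, hb, rfl⟩
    have hxA : s + b ∈ A := hfull s hs.1 hs.2 _ hnb
    rw [hO, mem_filter]
    refine ⟨hxA, ?_⟩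
    intro hc
    rw [evenV_nbrs hnb] at hc
    exact hc hs.2
  have hcd : E.card + (bvec d).card - 1 ≤ (E + bvec d).card :=
    by haveI := torsionFree d; exact cauchy_davenport_of_isAddTorsionFree hEne hBne
  have hle : E.card + 2 * d - 1 ≤ O.card := by
    have := Finset.card_le_card hsub
    rw [card_bvec] at hcd
    omega
  have hstep : 2 * d * (2 * d - 1) + 2 * d * E.card ≤ 2 * d * O.card := by
    rw [← Nat.mul_add]
    exact Nat.mul_le_mul_left _ (by omega)
  linarith [hmain, hstep]
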